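/- With the sets D_n defined by the recursive Mex algorithm, for every n ≥ 1 one has Mex(D_n) - Mex(D_{n-1}) ∈ {1, 2, 3, 4}. -/
import Mathlib


/-- Minimum excluded value of a set of natural numbers. -/
noncomputable def mex (S : Set ℕ) : ℕ := sInf {m : ℕ | m ∉ S}

/-- Coordinates of a set of triples. -/
def coords (G : Set (ℕ × ℕ × ℕ)) : Set ℕ :=
  {k | ∃ x ∈ G, k = x.1 ∨ k = x.2.1 ∨ k = x.2.2}

/-- Pairwise coordinate differences of a set of triples. -/
def diffs (G : Set (ℕ × ℕ × ℕ)) : Set ℕ :=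
  {d | ∃ x ∈ G, d = x.2.1 - x.1 ∨ d = x.2.2 - x.2.1 ∨ d = x.2.2 - x.1}

/-- One step of the Mex algorithm: the next P-position. -/
noncomputable def step (G : Set (ℕ × ℕ × ℕ)) : ℕ × ℕ × ℕ :=
  let F := coords G
  let D := diffs G
  let a := mex F
  let b := mex ((fun d => a + d) '' D ∪ Set.Icc 1 a ∪ F)
  let c := mex ((fun d => b + d) '' D ∪ Set.Icc 1 b ∪ F)
  (a, b, c)

/-- The sets `G_n` of P-positions computed by the Mex algorithm. -/
noncomputable def Gset : ℕ → Set (ℕ × ℕ × ℕ)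
  | 0 => {(0, 0, 0)}
  | n + 1 => Gset n ∪ {step (Gset n)}

/-- The `n`-th P-position `(v_1(n), v_2(n), v_3(n))`. -/
noncomputable def v : ℕ → ℕ × ℕ × ℕ
  | 0 => (0, 0, 0)
  | n + 1 => step (Gset n)

noncomputable def v1 (n : ℕ) : ℕ := (v n).1
noncomputable def v2 (n : ℕ) : ℕ := (v n).2.1
noncomputable def v3 (n : ℕ) : ℕ := (v n).2.2

/-- `F_n`: the set of coordinates of elements of `G_n`. -/
noncomputable def Fset (n : ℕ) : Set ℕ := coords (Gset n)

/-- `D_n`: the set of pairwise coordinate differences over `G_n`. -/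
noncomputable def Dset (n : ℕ) : Set ℕ := diffs (Gset n)

lemma mex_le {S : Set ℕ} {k : ℕ} (h : k ∉ S) : mex S ≤ k := Nat.sInf_le h

lemma mem_of_lt_mex {S : Set ℕ} {y : ℕ} (h : y < mex S) : y ∈ S := by
  by_contra hy
  exact absurd h (not_lt.mpr (mex_le hy))

lemma mex_eq_of {S : Set ℕ} {k : ℕ} (h1 : k ∉ S) (h2 : ∀ j < k, j ∈ S) : mex S = k := by
  refine le_antisymm (mex_le h1) ?_
  by_contra h
  push_neg at h
  have hne : {m : ℕ | m ∉ S}.Nonempty := ⟨k, h1⟩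
  have h3 : mex S ∉ S := Nat.sInf_mem hne
  exact h3 (h2 _ h)

lemma mex_not_mem {S : Set ℕ} (h : S.Finite) : mex S ∉ S := by
  have : {m : ℕ | m ∉ S}.Nonempty := by
    have := h.infinite_compl
    exact this.nonempty
  exact Nat.sInf_mem this

lemma lt_mex_of {S : Set ℕ} {k : ℕ} (hfin : S.Finite) (h : ∀ y ≤ k, y ∈ S) : k < mex S := by
  by_contra hc
  exact absurd (h _ (by omega)) (mex_not_mem hfin)



-- structural lemmas
lemma v1_succ (n : ℕ) : v1 (n+1) = mex (Fset n) := rfl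

lemma v2_succ (n : ℕ) : v2 (n+1) =
    mex ((fun d => v1 (n+1) + d) '' Dset n ∪ Set.Icc 1 (v1 (n+1)) ∪ Fset n) := rfl

lemma v3_succ (n : ℕ) : v3 (n+1) =
    mex ((fun d => v2 (n+1) + d) '' Dset n ∪ Set.Icc 1 (v2 (n+1)) ∪ Fset n) := rfl

lemma Gset_succ (n : ℕ) : Gset (n+1) = Gset n ∪ {v (n+1)} := rfl

lemma coords_union (G H : Set (ℕ × ℕ × ℕ)) : coords (G ∪ H) = coords G ∪ coords H := by
  ext k; constructor
  · rintro ⟨x, hx | hx, h⟩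
    · exact Or.inl ⟨x, hx, h⟩
    · exact Or.inr ⟨x, hx, h⟩
  · rintro (⟨x, hx, h⟩ | ⟨x, hx, h⟩)
    · exact ⟨x, Or.inl hx, h⟩
    · exact ⟨x, Or.inr hx, h⟩

lemma diffs_union (G H : Set (ℕ × ℕ × ℕ)) : diffs (G ∪ H) = diffs G ∪ diffs H := by
  ext k; constructor
  · rintro ⟨x, hx | hx, h⟩
    · exact Or.inl ⟨x, hx, h⟩
    · exact Or.inr ⟨x, hx, h⟩
  · rintro (⟨x, hx, h⟩ | ⟨x, hx, h⟩)
    · exact ⟨x, Or.inl hx, h⟩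
    · exact ⟨x, Or.inr hx, h⟩

lemma coords_singleton (p : ℕ × ℕ × ℕ) : coords {p} = {p.1, p.2.1, p.2.2} := by
  ext k; simp [coords]

lemma diffs_singleton (p : ℕ × ℕ × ℕ) : diffs {p} = {p.2.1 - p.1, p.2.2 - p.2.1, p.2.2 - p.1} := by
  ext k; simp [diffs]

lemma Fset_succ (n : ℕ) : Fset (n+1) = Fset n ∪ {v1 (n+1), v2 (n+1), v3 (n+1)} := by
  show coords (Gset (n+1)) = _
  rw [Gset_succ, coords_union, coords_singleton]
  rfl

lemma Dset_succ (n : ℕ) :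
    Dset (n+1) = Dset n ∪ {v2 (n+1) - v1 (n+1), v3 (n+1) - v2 (n+1), v3 (n+1) - v1 (n+1)} := by
  show diffs (Gset (n+1)) = _
  rw [Gset_succ, diffs_union, diffs_singleton]
  rfl

lemma Fset_zero : Fset 0 = {0} := by
  show coords (Gset 0) = _
  rw [show Gset 0 = {((0:ℕ),(0:ℕ),(0:ℕ))} from rfl, coords_singleton]
  simp

lemma Dset_zero : Dset 0 = {0} := by
  show diffs (Gset 0) = _
  rw [show Gset 0 = {((0:ℕ),(0:ℕ),(0:ℕ))} from rfl, diffs_singleton]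
  simp

lemma Fset_finite (n : ℕ) : (Fset n).Finite := by
  induction n with
  | zero => rw [Fset_zero]; exact Set.finite_singleton _
  | succ n ih => rw [Fset_succ]; exact ih.union (by simp)

lemma Dset_finite (n : ℕ) : (Dset n).Finite := by
  induction n with
  | zero => rw [Dset_zero]; exact Set.finite_singleton _
  | succ n ih => rw [Dset_succ]; exact ih.union (by simp)

lemma Fset_mono (n : ℕ) : Fset n ⊆ Fset (n+1) := by
  rw [Fset_succ]; exact Set.subset_union_left

lemma zero_mem_Fset (n : ℕ) : 0 ∈ Fset n := by
  induction n with
  | zero => rw [Fset_zero]; rfl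
  | succ n ih => exact Fset_mono n ih

lemma zero_mem_Dset (n : ℕ) : 0 ∈ Dset n := by
  induction n with
  | zero => rw [Dset_zero]; rfl
  | succ n ih => rw [Dset_succ]; exact Or.inl ih

lemma v_mem_Gset (n : ℕ) : v (n+1) ∈ Gset (n+1) := by
  rw [Gset_succ]; exact Or.inr rfl

lemma v1_mem_Fset (n : ℕ) : v1 (n+1) ∈ Fset (n+1) := ⟨v (n+1), v_mem_Gset n, Or.inl rfl⟩
lemma v2_mem_Fset (n : ℕ) : v2 (n+1) ∈ Fset (n+1) := ⟨v (n+1), v_mem_Gset n, Or.inr (Or.inl rfl)⟩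
lemma v3_mem_Fset (n : ℕ) : v3 (n+1) ∈ Fset (n+1) := ⟨v (n+1), v_mem_Gset n, Or.inr (Or.inr rfl)⟩

lemma Fset_elems : ∀ n, ∀ x ∈ Fset n,
    x = 0 ∨ ∃ k, 1 ≤ k ∧ k ≤ n ∧ (x = v1 k ∨ x = v2 k ∨ x = v3 k) := by
  intro n
  induction n with
  | zero => intro x hx; rw [Fset_zero] at hx; exact Or.inl hx
  | succ n ih =>
    intro x hx
    rw [Fset_succ] at hx
    rcases hx with hx | hx
    · rcases ih x hx with h | ⟨k, h1, h2, h3⟩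
      · exact Or.inl h
      · exact Or.inr ⟨k, h1, by omega, h3⟩
    · rcases hx with h | h | h
      · exact Or.inr ⟨n+1, by omega, le_refl _, Or.inl h⟩
      · exact Or.inr ⟨n+1, by omega, le_refl _, Or.inr (Or.inl h)⟩
      · exact Or.inr ⟨n+1, by omega, le_refl _, Or.inr (Or.inr h)⟩

-- base values
lemma dm0 : mex (Dset 0) = 1 := by
  rw [Dset_zero]
  apply mex_eq_of (by simp) (by intro j hj; interval_cases j; rfl)

lemma hv11 : v1 1 = 1 := by
  rw [v1_succ, Fset_zero]
  apply mex_eq_of (by simp) (by intro j hj; interval_cases j; rfl)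

lemma hv21 : v2 1 = 2 := by
  rw [v2_succ, hv11, Dset_zero, Fset_zero]
  apply mex_eq_of
  · simp
  · intro j hj
    simp [Set.mem_Icc]
    omega

lemma hv31 : v3 1 = 3 := by
  rw [v3_succ, hv21, Dset_zero, Fset_zero]
  apply mex_eq_of
  · simp
  · intro j hj
    simp [Set.mem_Icc]
    omega

lemma hF1 : Fset 1 = {0, 1, 2, 3} := by
  rw [Fset_succ, Fset_zero, hv11, hv21, hv31]
  ext x; simp; try omega

lemma hD1 : Dset 1 = {0, 1, 2} := by
  rw [Dset_succ, Dset_zero, hv11, hv21, hv31]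
  ext x; simp; try omega

lemma dm1 : mex (Dset 1) = 3 := by
  rw [hD1]
  apply mex_eq_of (by simp) (by intro j hj; simp; omega)

lemma hv12 : v1 2 = 4 := by
  rw [v1_succ, hF1]
  apply mex_eq_of (by simp) (by intro j hj; simp; omega)

lemma hv22 : v2 2 = 7 := by
  rw [v2_succ, hv12, hD1, hF1]
  apply mex_eq_of
  · simp [Set.image_insert_eq, Set.mem_Icc]
  · intro j hj
    simp [Set.image_insert_eq, Set.mem_Icc]
    omega

lemma hv32 : v3 2 = 10 := by
  rw [v3_succ, hv22, hD1, hF1]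
  apply mex_eq_of
  · simp [Set.image_insert_eq, Set.mem_Icc]
  · intro j hj
    simp [Set.image_insert_eq, Set.mem_Icc]
    omega

lemma hF2 : Fset 2 = {0, 1, 2, 3, 4, 7, 10} := by
  rw [Fset_succ, hF1, hv12, hv22, hv32]
  ext x; simp; try omega

lemma hD2 : Dset 2 = {0, 1, 2, 3, 6} := by
  rw [Dset_succ, hD1, hv12, hv22, hv32]
  ext x; simp; try omega

lemma dm2 : mex (Dset 2) = 4 := by
  rw [hD2]
  apply mex_eq_of (by simp) (by intro j hj; simp; omega)

lemma hv13 : v1 3 = 5 := by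
  rw [v1_succ, hF2]
  apply mex_eq_of (by simp) (by intro j hj; simp; omega)

lemma hv23 : v2 3 = 9 := by
  rw [v2_succ, hv13, hD2, hF2]
  apply mex_eq_of
  · simp [Set.image_insert_eq, Set.mem_Icc]
  · intro j hj
    simp [Set.image_insert_eq, Set.mem_Icc]
    omega

lemma hv33 : v3 3 = 13 := by
  rw [v3_succ, hv23, hD2, hF2]
  apply mex_eq_of
  · simp [Set.image_insert_eq, Set.mem_Icc]
  · intro j hj
    simp [Set.image_insert_eq, Set.mem_Icc]
    omega

lemma hF3 : Fset 3 = {0, 1, 2, 3, 4, 5, 7, 9, 10, 13} := by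
  rw [Fset_succ, hF2, hv13, hv23, hv33]
  ext x; simp; try omega

lemma hD3 : Dset 3 = {0, 1, 2, 3, 4, 6, 8} := by
  rw [Dset_succ, hD2, hv13, hv23, hv33]
  ext x; simp; try omega

lemma dm3 : mex (Dset 3) = 5 := by
  rw [hD3]
  apply mex_eq_of (by simp) (by intro j hj; simp; omega)

-- monotonicity of v1
lemma v1_lt (m : ℕ) : v1 (m+1) < v1 (m+2) := by
  rw [v1_succ m] at *
  rw [v1_succ (m+1)]
  apply lt_mex_of (Fset_finite (m+1))
  intro y hy
  rcases Nat.lt_or_ge y (mex (Fset m)) with h | h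
  · exact Fset_mono m (mem_of_lt_mex h)
  · have : y = mex (Fset m) := by omega
    rw [this, ← v1_succ m]
    exact v1_mem_Fset m

lemma v1_le {i j : ℕ} (h : i ≤ j) : v1 (i+1) ≤ v1 (j+1) := by
  induction j, h using Nat.le_induction with
  | base => exact le_refl _
  | succ k hk ih => exact le_trans ih (le_of_lt (v1_lt k))

-- the master invariant: facts about step n → n+1
structure Q (n : ℕ) : Prop where
  hab : v1 (n+1) < v2 (n+1)
  hbc : v2 (n+1) < v3 (n+1)
  hc : v3 (n+1) = v2 (n+1) + mex (Dset n)
  hbl : v1 (n+1) + mex (Dset n) ≤ v2 (n+1)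
  hbu : v2 (n+1) ≤ v1 (n+1) + mex (Dset n) + 2
  hbd : v2 (n+1) < v1 (n+1) + mex (Dset (n+1))
  hdl : mex (Dset n) < mex (Dset (n+1))
  hdu : mex (Dset (n+1)) ≤ mex (Dset n) + 4
  hFmax : ∀ x ∈ Fset (n+1), x ≤ v3 (n+1)
  hDmax : ∀ x ∈ Dset (n+1), x + 2 ≤ 2 * mex (Dset (n+1))
  hDiso : ∀ x, mex (Dset (n+1)) ≤ x → x ∈ Dset (n+1) → x + 1 ∉ Dset (n+1)

lemma Q0 : Q 0 := by
  have h1 : (0:ℕ)+1 = 1 := rfl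
  constructor <;> rw [h1]
  · rw [hv11, hv21]; try omega
  · rw [hv21, hv31]; try omega
  · rw [hv21, hv31, dm0]
  · rw [hv11, hv21, dm0]; try omega
  · rw [hv11, hv21, dm0]; try omega
  · rw [hv11, hv21, dm1]; try omega
  · rw [dm0, dm1]; try omega
  · rw [dm0, dm1]; try omega
  · intro x hx; rw [hF1] at hx; rw [hv31]; simp at hx; try omega
  · intro x hx; rw [hD1] at hx; rw [dm1]; simp at hx; try omega
  · intro x hx hm; rw [hD1] at hm ⊢; rw [dm1] at hx; simp at hm ⊢; try omega

lemma Q1 : Q 1 := by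
  have h1 : (1:ℕ)+1 = 2 := rfl
  constructor <;> rw [h1]
  · rw [hv12, hv22]; try omega
  · rw [hv22, hv32]; try omega
  · rw [hv22, hv32, dm1]
  · rw [hv12, hv22, dm1]; try omega
  · rw [hv12, hv22, dm1]; try omega
  · rw [hv12, hv22, dm2]; try omega
  · rw [dm1, dm2]; try omega
  · rw [dm1, dm2]; try omega
  · intro x hx; rw [hF2] at hx; rw [hv32]; simp at hx; try omega
  · intro x hx; rw [hD2] at hx; rw [dm2]; simp at hx; try omega
  · intro x hx hm; rw [hD2] at hm ⊢; rw [dm2] at hx; simp at hm ⊢; try omega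

lemma Q2 : Q 2 := by
  have h1 : (2:ℕ)+1 = 3 := rfl
  constructor <;> rw [h1]
  · rw [hv13, hv23]; try omega
  · rw [hv23, hv33]; try omega
  · rw [hv23, hv33, dm2]
  · rw [hv13, hv23, dm2]; try omega
  · rw [hv13, hv23, dm2]; try omega
  · rw [hv13, hv23, dm3]; try omega
  · rw [dm2, dm3]; try omega
  · rw [dm2, dm3]; try omega
  · intro x hx; rw [hF3] at hx; rw [hv33]; simp at hx; try omega
  · intro x hx; rw [hD3] at hx; rw [dm3]; simp at hx; try omega
  · intro x hx hm; rw [hD3] at hm ⊢; rw [dm3] at hx; simp at hm ⊢; try omega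

theorem Qall : ∀ n, Q n := by
  intro n
  induction n using Nat.strong_induction_on with
  | _ n IH =>
    match n, IH with
    | 0, _ => exact Q0
    | 1, _ => exact Q1
    | 2, _ => exact Q2
    | (m+3), IH =>
      -- current state: F = Fset (m+3), D = Dset (m+3); step produces v (m+4)
      have hFfin : (Fset (m+3)).Finite := Fset_finite (m+3)
      have hDfin : (Dset (m+3)).Finite := Dset_finite (m+3)
      have hQprev : Q (m+2) := IH (m+2) (by omega)
      -- d monotonicity
      have dmono : ∀ i j : ℕ, i ≤ j → j ≤ m+3 → mex (Dset i) ≤ mex (Dset j) := by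
        intro i j hij hj
        induction j, hij using Nat.le_induction with
        | base => exact le_refl _
        | succ k hk ihk =>
          have h1 : mex (Dset k) < mex (Dset (k+1)) := (IH k (by omega)).hdl
          have h2 := ihk (by omega)
          omega
      have hd5 : 5 ≤ mex (Dset (m+3)) := by
        have h := dmono 3 (m+3) (by omega) (le_refl _)
        rw [dm3] at h
        exact h
      -- a facts
      have hav : v1 (m+4) = mex (Fset (m+3)) := v1_succ (m+3)
      have haF : v1 (m+4) ∉ Fset (m+3) := by rw [hav]; exact mex_not_mem hFfin
      have haLow : ∀ y, y < v1 (m+4) → y ∈ Fset (m+3) := by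
        intro y hy; rw [hav] at hy; exact mem_of_lt_mex hy
      have ha1 : 1 ≤ v1 (m+4) := by
        have h0 : v1 (m+4) ≠ 0 := fun e => haF (e ▸ zero_mem_Fset (m+3))
        omega
      have haprev : v1 (m+3) < v1 (m+4) := v1_lt (m+2)
      -- d facts
      have hdD : mex (Dset (m+3)) ∉ Dset (m+3) := mex_not_mem hDfin
      have hdLow : ∀ y, y < mex (Dset (m+3)) → y ∈ Dset (m+3) := fun y hy => mem_of_lt_mex hy
      -- b facts
      have hbv : v2 (m+4) =
          mex ((fun d => v1 (m+4) + d) '' Dset (m+3) ∪ Set.Icc 1 (v1 (m+4)) ∪ Fset (m+3)) :=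
        v2_succ (m+3)
      have hSbfin : ((fun d => v1 (m+4) + d) '' Dset (m+3) ∪ Set.Icc 1 (v1 (m+4)) ∪ Fset (m+3)).Finite :=
        ((hDfin.image _).union (Set.finite_Icc _ _)).union hFfin
      have hSbmem : ∀ y, y ∈ (fun d => v1 (m+4) + d) '' Dset (m+3) ∪ Set.Icc 1 (v1 (m+4)) ∪ Fset (m+3) ↔
          ((∃ s ∈ Dset (m+3), y = v1 (m+4) + s) ∨ (1 ≤ y ∧ y ≤ v1 (m+4)) ∨ y ∈ Fset (m+3)) := by
        intro y
        constructor
        · rintro ((⟨s, hs, rfl⟩ | h) | h)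
          · exact Or.inl ⟨s, hs, rfl⟩
          · exact Or.inr (Or.inl (Set.mem_Icc.mp h))
          · exact Or.inr (Or.inr h)
        · rintro (⟨s, hs, rfl⟩ | h | h)
          · exact Or.inl (Or.inl ⟨s, hs, rfl⟩)
          · exact Or.inl (Or.inr (Set.mem_Icc.mpr h))
          · exact Or.inr h
      have hbS : ¬ ((∃ s ∈ Dset (m+3), v2 (m+4) = v1 (m+4) + s) ∨
          (1 ≤ v2 (m+4) ∧ v2 (m+4) ≤ v1 (m+4)) ∨ v2 (m+4) ∈ Fset (m+3)) := by
        rw [← hSbmem]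
        rw [hbv]
        exact mex_not_mem hSbfin
      push_neg at hbS
      obtain ⟨hbimg, hbicc, hbF⟩ := hbS
      have hbLow : ∀ y, y < v2 (m+4) →
          ((∃ s ∈ Dset (m+3), y = v1 (m+4) + s) ∨ (1 ≤ y ∧ y ≤ v1 (m+4)) ∨ y ∈ Fset (m+3)) := by
        intro y hy
        rw [← hSbmem]
        rw [hbv] at hy
        exact mem_of_lt_mex hy
      have hbgta : v1 (m+4) < v2 (m+4) := by
        by_contra hcon
        push_neg at hcon
        rcases Nat.eq_zero_or_pos (v2 (m+4)) with h0 | h0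
        · exact hbF (h0 ▸ zero_mem_Fset (m+3))
        · omega
      have hbd : v1 (m+4) + mex (Dset (m+3)) ≤ v2 (m+4) := by
        by_contra hcon
        push_neg at hcon
        have hs : v2 (m+4) - v1 (m+4) < mex (Dset (m+3)) := by omega
        have := hbimg (v2 (m+4) - v1 (m+4)) (hdLow _ hs)
        omega
      -- history: v2 k bounded
      have hbk : ∀ k, k ≤ m+2 → v2 (k+1) < v1 (k+1) + mex (Dset (k+1)) := by
        intro k hk
        exact (IH k (by omega)).hbd
      -- window: all high elements of Fset (m+3) are v3-values
      have hFwin : ∀ x, x ∈ Fset (m+3) → v1 (m+4) + mex (Dset (m+3)) ≤ x →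
          ∃ k, 1 ≤ k ∧ k ≤ m+3 ∧ x = v3 k := by
        intro x hx hxge
        rcases Fset_elems (m+3) x hx with h0 | ⟨k, hk1, hk2, hv | hv | hv⟩
        · omega
        · obtain ⟨j, rfl⟩ : ∃ j, k = j+1 := ⟨k-1, by omega⟩
          have h1 : v1 (j+1) ≤ v1 (m+3) := v1_le (show j ≤ m+2 by omega)
          omega
        · obtain ⟨j, rfl⟩ : ∃ j, k = j+1 := ⟨k-1, by omega⟩
          have h1 := hbk j (by omega)
          have h2 : v1 (j+1) ≤ v1 (m+3) := v1_le (show j ≤ m+2 by omega)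
          have h3 := dmono (j+1) (m+3) (by omega) (le_refl _)
          omega
        · exact ⟨k, hk1, hk2, hv⟩
      -- c gaps
      have hc3 : ∀ k, 1 ≤ k → k+1 ≤ m+3 → v3 k + 3 ≤ v3 (k+1) := by
        intro k hk1 hk2
        obtain ⟨j, rfl⟩ : ∃ j, k = j+1 := ⟨k-1, by omega⟩
        have Qj : Q j := IH j (by omega)
        have Qj1 : Q (j+1) := IH (j+1) (by omega)
        have e1 : v3 (j+1) = v2 (j+1) + mex (Dset j) := Qj.hc
        have e2 : v2 (j+1) < v1 (j+1) + mex (Dset (j+1)) := Qj.hbd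
        have e3 : v3 (j+2) = v2 (j+2) + mex (Dset (j+1)) := Qj1.hc
        have e4 : v1 (j+2) + mex (Dset (j+1)) ≤ v2 (j+2) := Qj1.hbl
        have e5 : v1 (j+1) < v1 (j+2) := v1_lt j
        have e6 : mex (Dset j) < mex (Dset (j+1)) := Qj.hdl
        show v3 (j+1) + 3 ≤ v3 (j+2)
        omega
      have hcgap : ∀ i j, 1 ≤ i → i < j → j ≤ m+3 → v3 i + 3 ≤ v3 j := by
        intro i j hi hij hj
        have key : ∀ jj, i+1 ≤ jj → jj ≤ m+3 → v3 i + 3 ≤ v3 jj := by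
          intro jj hj1
          induction jj, hj1 using Nat.le_induction with
          | base => intro h; exact hc3 i hi h
          | succ k hk ihk =>
            intro hk3
            have h2 := hc3 k (by omega) hk3
            have h1 := ihk (by omega)
            omega
        exact key j (by omega) hj
      have hwin_uniq : ∀ x y, x ∈ Fset (m+3) → y ∈ Fset (m+3) →
          v1 (m+4) + mex (Dset (m+3)) ≤ x → x < y → y ≤ x + 2 → False := by
        intro x y hx hy hxge hxy hyle
        obtain ⟨i, hi1, hi2, rfl⟩ := hFwin x hx hxge
        obtain ⟨j, hj1, hj2, rfl⟩ := hFwin y hy (by omega)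
        rcases Nat.lt_trichotomy i j with h | h | h
        · have := hcgap i j hi1 h hj2; omega
        · subst h; omega
        · have := hcgap j i hj1 h hi2; omega
      have hDiso_n : ∀ x, mex (Dset (m+3)) ≤ x → x ∈ Dset (m+3) → x + 1 ∉ Dset (m+3) :=
        hQprev.hDiso
      -- pin down b
      have hbcases : v2 (m+4) = v1 (m+4) + mex (Dset (m+3))
          ∨ v2 (m+4) = v1 (m+4) + mex (Dset (m+3)) + 1
          ∨ (v2 (m+4) = v1 (m+4) + mex (Dset (m+3)) + 2 ∧ mex (Dset (m+3)) + 1 ∈ Dset (m+3)) := by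
        by_cases hF0 : v1 (m+4) + mex (Dset (m+3)) ∈ Fset (m+3)
        · by_cases hD1' : mex (Dset (m+3)) + 1 ∈ Dset (m+3)
          · right; right
            have hD2' : mex (Dset (m+3)) + 2 ∉ Dset (m+3) := by
              intro hcon
              have h := hDiso_n (mex (Dset (m+3)) + 1) (by omega) hD1'
              apply h
              have e : mex (Dset (m+3)) + 1 + 1 = mex (Dset (m+3)) + 2 := by omega
              rw [e]; exact hcon
            have hF2' : v1 (m+4) + mex (Dset (m+3)) + 2 ∉ Fset (m+3) := by
              intro hcon
              exact hwin_uniq _ _ hF0 hcon (le_refl _) (by omega) (by omega)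
            have hnot : v1 (m+4) + mex (Dset (m+3)) + 2 ∉
                (fun d => v1 (m+4) + d) '' Dset (m+3) ∪ Set.Icc 1 (v1 (m+4)) ∪ Fset (m+3) := by
              rw [hSbmem]
              rintro (⟨s, hs, hes⟩ | h | h)
              · have : s = mex (Dset (m+3)) + 2 := by omega
                exact hD2' (this ▸ hs)
              · omega
              · exact hF2' h
            have hble : v2 (m+4) ≤ v1 (m+4) + mex (Dset (m+3)) + 2 := by
              rw [hbv]; exact mex_le hnot
            have hne0 : v2 (m+4) ≠ v1 (m+4) + mex (Dset (m+3)) := by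
              intro he; exact hbF (he ▸ hF0)
            have hne1 : v2 (m+4) ≠ v1 (m+4) + mex (Dset (m+3)) + 1 := by
              intro he
              have := hbimg (mex (Dset (m+3)) + 1) hD1'
              omega
            exact ⟨by omega, hD1'⟩
          · right; left
            have hF1' : v1 (m+4) + mex (Dset (m+3)) + 1 ∉ Fset (m+3) := by
              intro hcon
              exact hwin_uniq _ _ hF0 hcon (le_refl _) (by omega) (by omega)
            have hnot : v1 (m+4) + mex (Dset (m+3)) + 1 ∉
                (fun d => v1 (m+4) + d) '' Dset (m+3) ∪ Set.Icc 1 (v1 (m+4)) ∪ Fset (m+3) := by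
              rw [hSbmem]
              rintro (⟨s, hs, hes⟩ | h | h)
              · have : s = mex (Dset (m+3)) + 1 := by omega
                exact hD1' (this ▸ hs)
              · omega
              · exact hF1' h
            have hble : v2 (m+4) ≤ v1 (m+4) + mex (Dset (m+3)) + 1 := by
              rw [hbv]; exact mex_le hnot
            have hne0 : v2 (m+4) ≠ v1 (m+4) + mex (Dset (m+3)) := by
              intro he; exact hbF (he ▸ hF0)
            omega
        · left
          have hnot : v1 (m+4) + mex (Dset (m+3)) ∉
              (fun d => v1 (m+4) + d) '' Dset (m+3) ∪ Set.Icc 1 (v1 (m+4)) ∪ Fset (m+3) := by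
            rw [hSbmem]
            rintro (⟨s, hs, hes⟩ | h | h)
            · have : s = mex (Dset (m+3)) := by omega
              exact hdD (this ▸ hs)
            · omega
            · exact hF0 h
          have hble : v2 (m+4) ≤ v1 (m+4) + mex (Dset (m+3)) := by
            rw [hbv]; exact mex_le hnot
          omega
      -- c computation
      have hvmax : ∀ x ∈ Fset (m+3), x ≤ v3 (m+3) := hQprev.hFmax
      have hv3lt : v3 (m+3) < v2 (m+4) + mex (Dset (m+3)) := by
        have e1 : v3 (m+3) = v2 (m+3) + mex (Dset (m+2)) := hQprev.hc
        have e2 : v2 (m+3) < v1 (m+3) + mex (Dset (m+3)) := hQprev.hbd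
        have e3 : mex (Dset (m+2)) < mex (Dset (m+3)) := hQprev.hdl
        omega
      have hcv : v3 (m+4) =
          mex ((fun d => v2 (m+4) + d) '' Dset (m+3) ∪ Set.Icc 1 (v2 (m+4)) ∪ Fset (m+3)) :=
        v3_succ (m+3)
      have hScmem : ∀ y, y ∈ (fun d => v2 (m+4) + d) '' Dset (m+3) ∪ Set.Icc 1 (v2 (m+4)) ∪ Fset (m+3) ↔
          ((∃ s ∈ Dset (m+3), y = v2 (m+4) + s) ∨ (1 ≤ y ∧ y ≤ v2 (m+4)) ∨ y ∈ Fset (m+3)) := by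
        intro y
        constructor
        · rintro ((⟨s, hs, rfl⟩ | h) | h)
          · exact Or.inl ⟨s, hs, rfl⟩
          · exact Or.inr (Or.inl (Set.mem_Icc.mp h))
          · exact Or.inr (Or.inr h)
        · rintro (⟨s, hs, rfl⟩ | h | h)
          · exact Or.inl (Or.inl ⟨s, hs, rfl⟩)
          · exact Or.inl (Or.inr (Set.mem_Icc.mpr h))
          · exact Or.inr h
      have hceq : v3 (m+4) = v2 (m+4) + mex (Dset (m+3)) := by
        rw [hcv]
        apply mex_eq_of
        · rw [hScmem]
          rintro (⟨s, hs, hes⟩ | h | h)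
          · have : s = mex (Dset (m+3)) := by omega
            exact hdD (this ▸ hs)
          · omega
          · have := hvmax _ h; omega
        · intro j hj
          rw [hScmem]
          rcases Nat.eq_zero_or_pos j with h0 | h0
          · exact Or.inr (Or.inr (h0 ▸ zero_mem_Fset (m+3)))
          · rcases le_or_gt j (v2 (m+4)) with h1 | h1
            · exact Or.inr (Or.inl ⟨h0, h1⟩)
            · refine Or.inl ⟨j - v2 (m+4), hdLow _ (by omega), by omega⟩
      -- Dset (m+4) membership
      have hDmem : ∀ x, x ∈ Dset (m+4) ↔ (x ∈ Dset (m+3) ∨ x = v2 (m+4) - v1 (m+4) ∨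
          x = mex (Dset (m+3)) ∨ x = (v2 (m+4) - v1 (m+4)) + mex (Dset (m+3))) := by
        intro x
        have e2 : v3 (m+4) - v2 (m+4) = mex (Dset (m+3)) := by omega
        have e3 : v3 (m+4) - v1 (m+4) = (v2 (m+4) - v1 (m+4)) + mex (Dset (m+3)) := by omega
        rw [Dset_succ (m+3)]
        simp only [Set.mem_union, Set.mem_insert_iff, Set.mem_singleton_iff, e2, e3]
      have hDfin4 : (Dset (m+4)).Finite := Dset_finite (m+4)
      -- new mex lower bound
      have hmexlb : mex (Dset (m+3)) < mex (Dset (m+4)) := by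
        apply lt_mex_of hDfin4
        intro y hy
        rcases Nat.lt_or_ge y (mex (Dset (m+3))) with h | h
        · exact (hDmem y).mpr (Or.inl (hdLow y h))
        · exact (hDmem y).mpr (Or.inr (Or.inr (Or.inl (by omega))))
      -- new mex upper bound
      have hmexub : mex (Dset (m+4)) ≤ mex (Dset (m+3)) + 4 := by
        by_cases h3 : mex (Dset (m+3)) + 3 ∈ Dset (m+3)
        · have h4 : mex (Dset (m+3)) + 4 ∉ Dset (m+3) := by
            intro hcon
            have h := hDiso_n (mex (Dset (m+3)) + 3) (by omega) h3
            apply h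
            have e : mex (Dset (m+3)) + 3 + 1 = mex (Dset (m+3)) + 4 := by omega
            rw [e]; exact hcon
          have hnot : mex (Dset (m+3)) + 4 ∉ Dset (m+4) := by
            rw [hDmem]
            rintro (h | h | h | h)
            · exact h4 h
            · omega
            · omega
            · omega
          rw [show mex (Dset (m+4)) = mex (Dset (m+4)) from rfl]
          exact mex_le hnot
        · have hnot : mex (Dset (m+3)) + 3 ∉ Dset (m+4) := by
            rw [hDmem]
            rintro (h | h | h | h)
            · exact h3 h
            · omega
            · omega
            · omega
          have := mex_le hnot
          omega
      -- t < new mex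
      have hq5 : v2 (m+4) < v1 (m+4) + mex (Dset (m+4)) := by
        rcases hbcases with h | h | ⟨h, hD1'⟩
        · omega
        · have hkey : mex (Dset (m+3)) + 1 < mex (Dset (m+4)) := by
            apply lt_mex_of hDfin4
            intro y hy
            rcases Nat.lt_or_ge y (mex (Dset (m+3))) with hlt | hge
            · exact (hDmem y).mpr (Or.inl (hdLow y hlt))
            · rcases Nat.eq_or_lt_of_le hge with he | hlt2
              · exact (hDmem y).mpr (Or.inr (Or.inr (Or.inl (by omega))))
              · exact (hDmem y).mpr (Or.inr (Or.inl (by omega)))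
          omega
        · have hkey : mex (Dset (m+3)) + 2 < mex (Dset (m+4)) := by
            apply lt_mex_of hDfin4
            intro y hy
            rcases Nat.lt_or_ge y (mex (Dset (m+3))) with hlt | hge
            · exact (hDmem y).mpr (Or.inl (hdLow y hlt))
            · rcases Nat.lt_or_ge y (mex (Dset (m+3)) + 1) with h1 | h1
              · exact (hDmem y).mpr (Or.inr (Or.inr (Or.inl (by omega))))
              · rcases Nat.lt_or_ge y (mex (Dset (m+3)) + 2) with h2 | h2
                · exact (hDmem y).mpr (Or.inl (by
                    have : y = mex (Dset (m+3)) + 1 := by omega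
                    rw [this]; exact hD1'))
                · exact (hDmem y).mpr (Or.inr (Or.inl (by omega)))
          omega
      -- assemble
      have htub : v2 (m+4) ≤ v1 (m+4) + mex (Dset (m+3)) + 2 := by
        rcases hbcases with h | h | ⟨h, _⟩ <;> omega
      have hDmax_n : ∀ x ∈ Dset (m+3), x + 2 ≤ 2 * mex (Dset (m+3)) := hQprev.hDmax
      have hFs : Fset (m+4) = Fset (m+3) ∪ {v1 (m+4), v2 (m+4), v3 (m+4)} := Fset_succ (m+3)
      have hq7 : ∀ x ∈ Fset (m+4), x ≤ v3 (m+4) := by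
        intro x hx
        rw [hFs] at hx
        rcases hx with hx | hx
        · have := hvmax x hx; omega
        · rcases hx with rfl | rfl | rfl <;> omega
      have hq8 : ∀ x ∈ Dset (m+4), x + 2 ≤ 2 * mex (Dset (m+4)) := by
        intro x hx
        rcases (hDmem x).mp hx with h | h | h | h
        · have := hDmax_n x h; omega
        · omega
        · omega
        · omega
      have hq9 : ∀ x, mex (Dset (m+4)) ≤ x → x ∈ Dset (m+4) → x + 1 ∉ Dset (m+4) := by
        intro x hx hxm hx1m
        have hxd := (hDmem x).mp hxm
        have hx1d := (hDmem (x+1)).mp hx1m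
        rcases hxd with h1 | h1 | h1 | h1 <;> rcases hx1d with h2 | h2 | h2 | h2
        · exact hDiso_n x (by omega) h1 h2
        · omega
        · omega
        · have := hDmax_n x h1; omega
        · omega
        · omega
        · omega
        · omega
        · omega
        · omega
        · omega
        · omega
        · have := hDmax_n (x+1) h2; omega
        · omega
        · omega
        · omega
      have hq2 : v2 (m+4) < v3 (m+4) := by omega
      exact ⟨hbgta, hq2, hceq, hbd, htub, hq5, hmexlb, hmexub, hq7, hq8, hq9⟩

theorem stmt13 : ∀ n : ℕ, 1 ≤ n →
    (mex (Dset n) : ℤ) - mex (Dset (n - 1)) ∈ ({1, 2, 3, 4} : Set ℤ) := by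
  intro n hn
  obtain ⟨m, rfl⟩ : ∃ m, n = m + 1 := ⟨n - 1, by omega⟩
  have h1 : mex (Dset m) < mex (Dset (m+1)) := (Qall m).hdl
  have h2 : mex (Dset (m+1)) ≤ mex (Dset m) + 4 := (Qall m).hdu
  simp only [Nat.add_sub_cancel, Set.mem_insert_iff, Set.mem_singleton_iff]
  omega
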